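/- Let P_n ∈ ℤ[t] be defined by P_3 = 1 and P_{n+1} = (1+t)·P_n + (t/2)·∑_{j=2}^{n-2} C(n,j)·P_{j+1}·P_{n-j+1}. Then for every n ≥ 3, P_n is palindromic: t^{n-3}·P_n(1/t) = P_n(t), i.e. the coefficient of t^k equals the coefficient of t^{n-3-k} for all 0 ≤ k ≤ n−3. -/

import Mathlib

open Polynomial Finset

private lemma reflect_sum' {ι : Type*} (s : Finset ι) (f : ι → Polynomial ℚ) (N : ℕ) :
    Polynomial.reflect N (∑ i ∈ s, f i) = ∑ i ∈ s, Polynomial.reflect N (f i) := by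
  classical
  induction s using Finset.induction with
  | empty => simp [Polynomial.reflect_zero]
  | insert a s h ih => simp [Finset.sum_insert h, Polynomial.reflect_add, ih]

private lemma reflect_succ' (p : Polynomial ℚ) (N : ℕ) (h : p.natDegree ≤ N) :
    p.reflect (N + 1) = X * p.reflect N := by
  ext k
  cases k with
  | zero =>
    rw [coeff_reflect, revAt_le (Nat.zero_le _), Nat.sub_zero, mul_coeff_zero,
      coeff_X_zero, zero_mul, coeff_eq_zero_of_natDegree_lt (by omega)]
  | succ k =>
    rw [coeff_reflect, coeff_X_mul, coeff_reflect]
    by_cases hk : k ≤ N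
    · rw [revAt_le (by omega), revAt_le hk]
      congr 1
      omega
    · rw [revAt_eq_self_of_lt (by omega), revAt_eq_self_of_lt (by omega),
        coeff_eq_zero_of_natDegree_lt (by omega),
        coeff_eq_zero_of_natDegree_lt (by omega)]

theorem keel_palindromic (P : ℕ → Polynomial ℚ) (h3 : P 3 = 1)
    (hrec : ∀ n, 3 ≤ n → P (n + 1) = (1 + X) * P n +
      C (1/2 : ℚ) * X * ∑ j ∈ Icc 2 (n - 2),
        (n.choose j : Polynomial ℚ) * P (j + 1) * P (n - j + 1)) :
    ∀ n, 3 ≤ n → ∀ k, k ≤ n - 3 →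
      (P n).coeff k = (P n).coeff (n - 3 - k) := by
  have key : ∀ n, 3 ≤ n → (P n).natDegree ≤ n - 3 ∧ (P n).reflect (n - 3) = P n := by
    intro n
    induction n using Nat.strong_induction_on with
    | _ n ih =>
      intro hn
      rcases Nat.lt_or_ge n 4 with h4 | h4
      · have : n = 3 := by omega
        subst this
        simp [h3, reflect_one]
      · obtain ⟨m, rfl⟩ : ∃ m, n = m + 1 := ⟨n - 1, by omega⟩
        have hm : 3 ≤ m := by omega
        -- facts per summand
        have hsum : ∀ j ∈ Icc 2 (m - 2),
            ((m.choose j : Polynomial ℚ) * P (j + 1) * P (m - j + 1)).natDegree ≤ m - 4 ∧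
            ((m.choose j : Polynomial ℚ) * P (j + 1) * P (m - j + 1)).reflect (m - 4) =
              (m.choose j : Polynomial ℚ) * P (j + 1) * P (m - j + 1) := by
          intro j hj
          rw [Finset.mem_Icc] at hj
          obtain ⟨hj2, hjm⟩ := hj
          have h1 := ih (j + 1) (by omega) (by omega)
          have h2 := ih (m - j + 1) (by omega) (by omega)
          have e1 : j + 1 - 3 = j - 2 := by omega
          have e2 : m - j + 1 - 3 = m - j - 2 := by omega
          rw [e1] at h1
          rw [e2] at h2
          have hC : (m.choose j : Polynomial ℚ) = C ((m.choose j : ℚ)) := by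
            simp
          constructor
          · calc ((m.choose j : Polynomial ℚ) * P (j + 1) * P (m - j + 1)).natDegree
                ≤ ((m.choose j : Polynomial ℚ) * P (j + 1)).natDegree + (P (m - j + 1)).natDegree :=
                  natDegree_mul_le
              _ ≤ (m.choose j : Polynomial ℚ).natDegree + (P (j + 1)).natDegree
                    + (P (m - j + 1)).natDegree := by
                  exact Nat.add_le_add_right natDegree_mul_le _
              _ ≤ 0 + (j - 2) + (m - j - 2) := by
                  gcongr
                  · rw [hC]; exact (natDegree_C _).le
                  · exact h1.1
                  · exact h2.1
              _ ≤ m - 4 := by omega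
          · rw [hC, mul_assoc, reflect_C_mul]
            have e3 : m - 4 = (j - 2) + (m - j - 2) := by omega
            rw [e3, reflect_mul _ _ h1.1 h2.1, h1.2, h2.2]
        set T := ∑ j ∈ Icc 2 (m - 2),
            (m.choose j : Polynomial ℚ) * P (j + 1) * P (m - j + 1) with hT
        have hTdeg : T.natDegree ≤ m - 4 := by
          apply Polynomial.natDegree_sum_le_of_forall_le
          intro j hj
          exact (hsum j hj).1
        have hTrefl : T.reflect (m - 4) = T := by
          rw [hT, reflect_sum']
          exact Finset.sum_congr rfl fun j hj => (hsum j hj).2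
        have hPmdeg : (P m).natDegree ≤ m - 3 := (ih m (by omega) hm).1
        have hPmrefl : (P m).reflect (m - 3) = P m := (ih m (by omega) hm).2
        rw [hrec m hm]
        have e4 : m + 1 - 3 = m - 2 := by omega
        rw [e4, ← hT]
        have hdeg1 : ((1 : Polynomial ℚ) + X).natDegree ≤ 1 := by
          apply le_trans (natDegree_add_le _ _)
          simp
        have hdegCX : (C (1/2 : ℚ) * X).natDegree ≤ 1 := by
          apply le_trans natDegree_mul_le
          simp
        have hXT : (X * T).natDegree ≤ m - 3 := by
          by_cases hm4 : 4 ≤ m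
          · apply le_trans natDegree_mul_le
            simp only [natDegree_X]
            omega
          · have hm3 : m = 3 := by omega
            have hT0 : T = 0 := by
              rw [hT, hm3]
              simp
            rw [hT0, mul_zero]
            simp
        constructor
        · apply le_trans (natDegree_add_le _ _)
          apply max_le
          · calc ((1 + X) * P m).natDegree ≤ (1 + X : Polynomial ℚ).natDegree + (P m).natDegree :=
                natDegree_mul_le
              _ ≤ 1 + (m - 3) := add_le_add hdeg1 hPmdeg
              _ ≤ m - 2 := by omega
          · calc (C (1/2 : ℚ) * X * T).natDegree
                ≤ (C (1/2 : ℚ) * X).natDegree + T.natDegree := natDegree_mul_le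
              _ ≤ 1 + (m - 4) := add_le_add hdegCX hTdeg
              _ ≤ m - 2 := by omega
        · have e5 : m - 2 = 1 + (m - 3) := by omega
          have refl1 : ((1 : Polynomial ℚ) + X).reflect 1 = 1 + X := by
            rw [reflect_add, reflect_one, reflect_one_X, pow_one, add_comm]
          have A : ((1 + X) * P m).reflect (m - 2) = (1 + X) * P m := by
            rw [e5, reflect_mul _ _ hdeg1 hPmdeg, refl1, hPmrefl]
          have B : (X * T).reflect (m - 2) = X * T := by
            by_cases hm4 : 4 ≤ m
            · have e6 : m - 2 = (m - 3) + 1 := by omega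
              have e7 : m - 3 = 1 + (m - 4) := by omega
              rw [e6, reflect_succ' _ _ hXT]
              congr 1
              rw [e7, reflect_mul _ _ (natDegree_X_le) hTdeg, reflect_one_X, one_mul, hTrefl]
            · have hT0 : T = 0 := by
                rw [hT, show m - 2 = 1 from by omega]
                simp
              rw [hT0, mul_zero, reflect_zero]
          rw [reflect_add, A, mul_assoc, reflect_C_mul, B, ← mul_assoc]
  intro n hn k hk
  obtain ⟨hdeg, hrefl⟩ := key n hn
  conv_lhs => rw [← hrefl]
  rw [coeff_reflect, revAt_le hk]
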